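/- Let $d \geq 1$ be a natural number. For every real $x$ with $0 \leq x \leq 1$, $$1 - (1-x)^d \;\geq\; d\, x\, (1-x)^{\frac{d-1}{2}},$$ where $(1-x)^d$ is a natural-number power and $(1-x)^{\frac{d-1}{2}}$ denotes the real power of the nonnegative base $1-x$. -/

import Mathlib

lemma geom_sum_ge (d : ℕ) (hd : 1 ≤ d) (t : ℝ) (ht : 0 ≤ t) :
    (d : ℝ) * t ^ (((d : ℝ) - 1) / 2) ≤ ∑ i ∈ Finset.range d, t ^ i := by
  have hd0 : (0:ℝ) < d := by exact_mod_cast hd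
  have amgm := Real.geom_mean_le_arith_mean_weighted (Finset.range d)
    (fun _ => (d:ℝ)⁻¹) (fun i => t ^ i)
    (fun i _ => by positivity)
    (by simp [Finset.sum_const]; field_simp)
    (fun i _ => pow_nonneg ht i)
  have hprod : (∏ i ∈ Finset.range d, (t ^ i) ^ ((d:ℝ)⁻¹)) = t ^ (((d : ℝ) - 1) / 2) := by
    have h1 : ∀ i ∈ Finset.range d, (t ^ i) ^ ((d:ℝ)⁻¹) = t ^ ((i:ℝ) * (d:ℝ)⁻¹) := by
      intro i _
      rw [← Real.rpow_natCast t i, ← Real.rpow_mul ht]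
    rw [Finset.prod_congr rfl h1, ← Real.rpow_sum_of_nonneg ht
      (fun i _ => by positivity)]
    congr 1
    rw [← Finset.sum_mul]
    have hsum : (∑ i ∈ Finset.range d, (i:ℝ)) = d * (d - 1) / 2 := by
      have := Finset.sum_range_id_mul_two d
      have : ((∑ i ∈ Finset.range d, i) * 2 : ℝ) = (d * (d-1) : ℕ) := by
        exact_mod_cast congrArg (Nat.cast : ℕ → ℝ) this
      push_cast [Nat.cast_sub hd] at this
      linarith [this]
    rw [hsum]
    field_simp
  rw [hprod] at amgm
  have hsum2 : (∑ i ∈ Finset.range d, (d:ℝ)⁻¹ * t ^ i) =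
      (d:ℝ)⁻¹ * ∑ i ∈ Finset.range d, t ^ i := by rw [Finset.mul_sum]
  rw [hsum2] at amgm
  calc (d : ℝ) * t ^ (((d : ℝ) - 1) / 2)
      ≤ (d : ℝ) * ((d:ℝ)⁻¹ * ∑ i ∈ Finset.range d, t ^ i) :=
        mul_le_mul_of_nonneg_left amgm (le_of_lt hd0)
    _ = ∑ i ∈ Finset.range d, t ^ i := by field_simp

theorem g_inequality (d : ℕ) (hd : 1 ≤ d) :
    ∀ x : ℝ, 0 ≤ x → x ≤ 1 →
      1 - (1 - x) ^ d ≥ (d : ℝ) * x * (1 - x) ^ (((d : ℝ) - 1) / 2) := by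
  intro x hx hx1
  set t := 1 - x with ht
  have ht0 : 0 ≤ t := by linarith
  have hfac : 1 - t ^ d = (∑ i ∈ Finset.range d, t ^ i) * x := by
    have := geom_sum_mul t d
    have hx' : t - 1 = -x := by rw [ht]; ring
    rw [hx'] at this
    nlinarith [this]
  rw [hfac]
  have key := geom_sum_ge d hd t ht0
  calc (d : ℝ) * x * t ^ (((d : ℝ) - 1) / 2)
      = ((d:ℝ) * t ^ (((d : ℝ) - 1) / 2)) * x := by ring
    _ ≤ (∑ i ∈ Finset.range d, t ^ i) * x := mul_le_mul_of_nonneg_right key hx
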